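/- For every n ≥ 2: if L_n = V_1·L_{n-1} and I^n ∩ J = I·(I^{n-1} ∩ J), then L̄_n = V̄_1·L̄_{n-1}. Equivalently, if E(I)_n = 0 and the n-th Artin-Rees module E(J,A;I)_n = (I^n ∩ J)/I·(I^{n-1} ∩ J) vanishes, then E(I;A/J)_n = 0; consequently rt(I;A/J) ≤ max(rt(I), s(J,A;I)) and st(I;A/J) ≤ st(I) + m(J,A;I) − 1. -/

import Mathlib

/-- The `A`-submodule of homogeneous elements of degree `n` in the kernel `L` of the
presentation `φ : A[X_1,…,X_r] → A[t]`, `X_i ↦ x_i t`, of the Rees algebra of the ideal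
`I = (x_1,…,x_r)`; i.e. the degree-`n` equations `L_n` of the Rees algebra. -/
noncomputable def reesRel {A : Type*} [CommRing A] {r : ℕ} (x : Fin r → A) (n : ℕ) :
    Submodule A (MvPolynomial (Fin r) A) :=
  (RingHom.ker (MvPolynomial.aeval (fun i => Polynomial.C (x i) * Polynomial.X) :
      MvPolynomial (Fin r) A →ₐ[A] Polynomial A)).restrictScalars A
  ⊓ MvPolynomial.homogeneousSubmodule (Fin r) A n

/-- `E(I)_n = 0`, i.e. `L_n = V_1·L_{n-1}`: the degree-`n` equations of the Rees algebra
are generated by those of degree `n-1`. -/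
def reesRelStable {A : Type*} [CommRing A] {r : ℕ} (x : Fin r → A) (n : ℕ) : Prop :=
  reesRel x n = MvPolynomial.homogeneousSubmodule (Fin r) A 1 * reesRel x (n - 1)

/-- The set `SD(I) = {1} ∪ {n ≥ 2 : L_n ≠ V_1·L_{n-1}}` of sifted degrees. -/
def siftedDegrees {A : Type*} [CommRing A] {r : ℕ} (x : Fin r → A) : Set ℕ :=
  {1} ∪ {n : ℕ | 2 ≤ n ∧ ¬ reesRelStable x n}

/-- The sifted type `st(I) = card SD(I)`. -/
noncomputable def siftedType {A : Type*} [CommRing A] {r : ℕ} (x : Fin r → A) : ℕ :=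
  (siftedDegrees x).ncard

/-- The relation type `rt(I)`: the least `s ≥ 1` with `L_n = V_1·L_{n-1}` for all
`n ≥ s+1`. -/
noncomputable def relType {A : Type*} [CommRing A] {r : ℕ} (x : Fin r → A) : ℕ :=
  sInf {s : ℕ | 1 ≤ s ∧ ∀ n, s + 1 ≤ n → reesRelStable x n}

/-- The strong Artin-Rees number `s(J,A;I)`: the least `s ≥ 1` with
`I^n ∩ J = I·(I^{n-1} ∩ J)` for all `n ≥ s+1`. -/
noncomputable def strongAR {A : Type*} [CommRing A] (I J : Ideal A) : ℕ :=
  sInf {s : ℕ | 1 ≤ s ∧ ∀ n, s + 1 ≤ n → I ^ n ⊓ J = I * (I ^ (n - 1) ⊓ J)}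

/-- The medium Artin-Rees number `m(J,A;I) = 1 + card{n ≥ 2 : E(J,A;I)_n ≠ 0}`. -/
noncomputable def mediumAR {A : Type*} [CommRing A] (I J : Ideal A) : ℕ :=
  1 + {n : ℕ | 2 ≤ n ∧ I ^ n ⊓ J ≠ I * (I ^ (n - 1) ⊓ J)}.ncard

/-- The weak Artin-Rees number `w(J,A;I)`: the least `s ≥ 1` with
`I^n ∩ J ⊆ I^{n-s}·J` for all `n ≥ s`. -/
noncomputable def weakAR {A : Type*} [CommRing A] (I J : Ideal A) : ℕ :=
  sInf {s : ℕ | 1 ≤ s ∧ ∀ n, s ≤ n → I ^ n ⊓ J ≤ I ^ (n - s) * J}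

open MvPolynomial

section Auxiliary

variable {A : Type*} [CommRing A] {r : ℕ}

lemma phi_coeff (x : Fin r → A) (p : MvPolynomial (Fin r) A) (n : ℕ) :
    ((MvPolynomial.aeval (fun i => Polynomial.C (x i) * Polynomial.X) :
        MvPolynomial (Fin r) A →ₐ[A] Polynomial A) p).coeff n
      = MvPolynomial.eval x (MvPolynomial.homogeneousComponent n p) := by
  induction p using MvPolynomial.induction_on' with
  | add p q hp hq => simp [map_add, hp, hq]
  | monomial d a =>
      rw [aeval_monomial]
      have h1 : (Finsupp.prod d fun i k => (Polynomial.C (x i) * Polynomial.X) ^ k)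
          = Polynomial.C (Finsupp.prod d fun i k => (x i) ^ k) * Polynomial.X ^ d.degree := by
        rw [Finsupp.prod, Finsupp.prod]
        simp_rw [mul_pow, ← Polynomial.C_pow]
        rw [Finset.prod_mul_distrib, Finset.prod_pow_eq_pow_sum, map_prod, Finsupp.degree_apply]
      rw [h1, Polynomial.algebraMap_eq, ← mul_assoc, ← Polynomial.C_mul,
        homogeneousComponent_of_mem (mem_homogeneousSubmodule _ _ |>.mpr
          (isHomogeneous_monomial a rfl)),
        Polynomial.coeff_C_mul, Polynomial.coeff_X_pow]
      by_cases h : n = d.degree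
      · simp [h, eval_monomial]
      · simp [h, Ne.symm h]

lemma mem_reesRel_iff {x : Fin r → A} {n : ℕ} {p : MvPolynomial (Fin r) A} :
    p ∈ reesRel x n ↔ p.IsHomogeneous n ∧ MvPolynomial.eval x p = 0 := by
  constructor
  · rintro ⟨hk, hh⟩
    have hh' : p.IsHomogeneous n := hh
    refine ⟨hh', ?_⟩
    have := phi_coeff x p n
    rw [RingHom.mem_ker.mp hk] at this
    rw [homogeneousComponent_of_mem hh, if_pos rfl] at this
    simpa using this.symm
  · rintro ⟨hh, he⟩
    refine ⟨?_, hh⟩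
    show _ ∈ RingHom.ker _
    rw [RingHom.mem_ker]
    ext m
    rw [Polynomial.coeff_zero, phi_coeff x p m,
      homogeneousComponent_of_mem (mem_homogeneousSubmodule _ _ |>.mpr hh)]
    split <;> simp_all

lemma homSub_succ (n : ℕ) :
    homogeneousSubmodule (Fin r) A 1 * homogeneousSubmodule (Fin r) A n
      = homogeneousSubmodule (Fin r) A (n + 1) := by
  apply le_antisymm
  · simpa [Nat.add_comm] using homogeneousSubmodule_mul (σ := Fin r) (R := A) 1 n
  · intro p hp
    rw [← support_sum_monomial_coeff p]
    apply Submodule.sum_mem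
    intro d hd
    have hc : coeff d p ≠ 0 := mem_support_iff.mp hd
    have hdeg : d.degree = n + 1 := by
      by_contra hne
      exact hc ((mem_homogeneousSubmodule _ _).mp hp |>.coeff_eq_zero hne)
    have hd0 : ∃ i, d i ≠ 0 := by
      by_contra h
      push_neg at h
      have : d = 0 := Finsupp.ext h
      rw [this, map_zero] at hdeg
      omega
    obtain ⟨i, hi⟩ := hd0
    set e : Fin r →₀ ℕ := d - Finsupp.single i 1 with he
    have hde : Finsupp.single i 1 + e = d := by
      ext j
      simp only [Finsupp.add_apply, Finsupp.tsub_apply, Finsupp.single_apply, he]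
      by_cases hij : i = j
      · subst hij; rw [if_pos rfl]; omega
      · simp [hij]
    have hmon : (monomial d (coeff d p) : MvPolynomial (Fin r) A)
        = X i * monomial e (coeff d p) := by
      rw [X, monomial_mul, one_mul, hde]
    have hedeg : e.degree = n := by
      have hdadd : ((Finsupp.single i 1 : Fin r →₀ ℕ) + e).degree
          = (Finsupp.single i 1 : Fin r →₀ ℕ).degree + e.degree := by
        simp only [Finsupp.degree_eq_weight_one]
        exact map_add _ _ _
      have hsingle : (Finsupp.single i 1 : Fin r →₀ ℕ).degree = 1 := by
        rw [Finsupp.degree_apply, Finsupp.support_single_ne_zero _ one_ne_zero,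
          Finset.sum_singleton, Finsupp.single_eq_same]
      have := congrArg Finsupp.degree hde
      rw [hdadd, hsingle, hdeg] at this
      omega
    rw [hmon]
    exact Submodule.mul_mem_mul (isHomogeneous_X A i) (isHomogeneous_monomial _ hedeg)

lemma homSub_mul_reesRel_le (x : Fin r → A) (m : ℕ) :
    homogeneousSubmodule (Fin r) A 1 * reesRel x m ≤ reesRel x (m + 1) := by
  rw [Submodule.mul_le]
  intro f hf g hg
  rw [mem_reesRel_iff] at hg ⊢
  obtain ⟨hg1, hg2⟩ := hg
  refine ⟨?_, by simp [hg2]⟩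
  simpa [Nat.add_comm] using ((mem_homogeneousSubmodule _ _).mp hf).mul hg1

lemma prod_pow_mem (x : Fin r → A) (d : Fin r →₀ ℕ) :
    (d.prod fun i k => x i ^ k) ∈ (Ideal.span (Set.range x)) ^ d.degree := by
  rw [Finsupp.prod, Finsupp.degree_apply]
  classical
  induction d.support using Finset.induction with
  | empty => simp
  | @insert a s ha ih =>
      rw [Finset.prod_insert ha, Finset.sum_insert ha, pow_add]
      exact Ideal.mul_mem_mul
        (Ideal.pow_mem_pow (Ideal.subset_span (Set.mem_range_self a)) _) ih

lemma eval_mem_pow (x : Fin r → A) {n : ℕ} {p : MvPolynomial (Fin r) A}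
    (hp : p.IsHomogeneous n) :
    MvPolynomial.eval x p ∈ (Ideal.span (Set.range x)) ^ n := by
  rw [← support_sum_monomial_coeff p, map_sum]
  apply Ideal.sum_mem
  intro d hd
  have hdeg : d.degree = n := by
    by_contra hne
    exact mem_support_iff.mp hd (hp.coeff_eq_zero hne)
  rw [eval_monomial]
  exact Ideal.mul_mem_left _ _ (hdeg ▸ prod_pow_mem x d)

lemma exists_eval_eq_one (x : Fin r → A) {a : A}
    (ha : a ∈ Ideal.span (Set.range x)) :
    ∃ ℓ : MvPolynomial (Fin r) A, ℓ.IsHomogeneous 1 ∧ MvPolynomial.eval x ℓ = a := by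
  induction ha using Submodule.span_induction with
  | mem a hmem =>
      obtain ⟨i, rfl⟩ := hmem
      exact ⟨X i, isHomogeneous_X _ _, by simp⟩
  | zero => exact ⟨0, isHomogeneous_zero _ _ _, by simp⟩
  | add a b _ _ iha ihb =>
      obtain ⟨l1, h11, h12⟩ := iha
      obtain ⟨l2, h21, h22⟩ := ihb
      exact ⟨l1 + l2, h11.add h21, by simp [h12, h22]⟩
  | smul c a _ iha =>
      obtain ⟨l, h1, h2⟩ := iha
      exact ⟨C c * l, by simpa using (isHomogeneous_C _ c).mul h1, by simp [h2]⟩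

lemma exists_eval_eq (x : Fin r → A) (n : ℕ) {c : A}
    (hc : c ∈ (Ideal.span (Set.range x)) ^ n) :
    ∃ p : MvPolynomial (Fin r) A, p.IsHomogeneous n ∧ MvPolynomial.eval x p = c := by
  induction n generalizing c with
  | zero => exact ⟨C c, isHomogeneous_C _ _, by simp⟩
  | succ n ih =>
      rw [pow_succ'] at hc
      refine Submodule.mul_induction_on hc ?_ ?_
      · intro a ha b hb
        obtain ⟨q, hq1, hq2⟩ := ih hb
        obtain ⟨ℓ, hl1, hl2⟩ := exists_eval_eq_one x ha
        exact ⟨ℓ * q, by simpa [Nat.add_comm] using hl1.mul hq1, by simp [hl2, hq2]⟩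
      · rintro y z ⟨p1, h11, h12⟩ ⟨p2, h21, h22⟩
        exact ⟨p1 + p2, h11.add h21, by simp [h12, h22]⟩

lemma mk_eval {B : Type*} [CommRing B] (f : A →+* B) (x : Fin r → A)
    (p : MvPolynomial (Fin r) A) :
    MvPolynomial.eval (fun i => f (x i)) (MvPolynomial.map f p)
      = f (MvPolynomial.eval x p) := by
  rw [eval_map, MvPolynomial.eval, coe_eval₂Hom, eval₂_comp_left f (RingHom.id A) x p]
  rfl

lemma hc_mul {f g : MvPolynomial (Fin r) A} {dg n : ℕ} (hg : g.IsHomogeneous dg)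
    (hd : dg ≤ n) :
    homogeneousComponent n (f * g) = homogeneousComponent (n - dg) f * g := by
  induction f using MvPolynomial.induction_on' with
  | add p q hp hq => rw [add_mul, map_add, map_add, hp, hq, add_mul]
  | monomial e a =>
      have h1 : ((monomial e a : MvPolynomial (Fin r) A) * g).IsHomogeneous
          (e.degree + dg) := (isHomogeneous_monomial a rfl).mul hg
      rw [homogeneousComponent_of_mem ((mem_homogeneousSubmodule _ _).mpr h1),
        homogeneousComponent_of_mem ((mem_homogeneousSubmodule _ _).mpr
          (isHomogeneous_monomial a rfl))]
      by_cases h : n = e.degree + dg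
      · rw [if_pos h, if_pos (by omega)]
      · rw [if_neg h, if_neg (by omega), zero_mul]

lemma part1 (x : Fin r → A) (J : Ideal A) (n : ℕ) (h2 : 2 ≤ n)
    (hst : reesRelStable x n)
    (har : (Ideal.span (Set.range x)) ^ n ⊓ J =
      Ideal.span (Set.range x) * ((Ideal.span (Set.range x)) ^ (n - 1) ⊓ J)) :
    reesRelStable (fun i => Ideal.Quotient.mk J (x i)) n := by
  set mk := Ideal.Quotient.mk J with hmk
  set xb : Fin r → A ⧸ J := fun i => mk (x i) with hxb
  have hn1 : n - 1 + 1 = n := by omega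
  apply le_antisymm
  · -- hard direction
    intro pb hpb
    obtain ⟨hpbh, hpbe⟩ := mem_reesRel_iff.mp hpb
    -- lift pb to a homogeneous polynomial p over A
    set g : A ⧸ J → A := Function.surjInv Ideal.Quotient.mk_surjective with hg
    have hgmk : ∀ c, mk (g c) = c := fun c =>
      Function.surjInv_eq Ideal.Quotient.mk_surjective c
    set p : MvPolynomial (Fin r) A :=
      ∑ d ∈ pb.support, monomial d (g (coeff d pb)) with hp
    have hmapp : MvPolynomial.map mk p = pb := by
      rw [hp, map_sum]
      simp_rw [map_monomial, hgmk]
      exact support_sum_monomial_coeff pb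
    have hph : p.IsHomogeneous n := by
      apply IsHomogeneous.sum
      intro d hd
      apply isHomogeneous_monomial
      by_contra hne
      exact mem_support_iff.mp hd (hpbh.coeff_eq_zero hne)
    have hevJ : MvPolynomial.eval x p ∈ (Ideal.span (Set.range x)) ^ n ⊓ J := by
      have hz : mk (MvPolynomial.eval x p) = 0 := by
        rw [← mk_eval mk x p, hmapp]; exact hpbe
      exact ⟨eval_mem_pow x hph, Ideal.Quotient.eq_zero_iff_mem.mp hz⟩
    rw [har] at hevJ
    -- find homogeneous h with eval x h = eval x p and good image
    have hB : ∃ h : MvPolynomial (Fin r) A, h.IsHomogeneous n ∧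
        MvPolynomial.eval x h = MvPolynomial.eval x p ∧
        MvPolynomial.map mk h ∈
          MvPolynomial.homogeneousSubmodule (Fin r) (A ⧸ J) 1 * reesRel xb (n - 1) := by
      refine Submodule.mul_induction_on hevJ ?_ ?_
      · intro a ha b hb
        obtain ⟨ℓ, hl1, hl2⟩ := exists_eval_eq x 1 (by rwa [pow_one])
        obtain ⟨q, hq1, hq2⟩ := exists_eval_eq x (n - 1) hb.1
        have hlq : (ℓ * q).IsHomogeneous n := by
          have hx' := hl1.mul hq1
          rwa [show 1 + (n - 1) = n by omega] at hx'
        refine ⟨ℓ * q, hlq, by simp [hl2, hq2], ?_⟩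
        rw [map_mul]
        refine Submodule.mul_mem_mul (hl1.map mk) (mem_reesRel_iff.mpr ⟨hq1.map mk, ?_⟩)
        rw [hxb, mk_eval mk x q, hq2]
        exact Ideal.Quotient.eq_zero_iff_mem.mpr hb.2
      · rintro y z hy hz
        obtain ⟨u1, ha1, hb1, hc1⟩ := hy
        obtain ⟨u2, ha2, hb2, hc2⟩ := hz
        refine ⟨u1 + u2, ha1.add ha2, by simp [hb1, hb2], ?_⟩
        rw [map_add]
        exact Submodule.add_mem _ hc1 hc2
    obtain ⟨h, hh1, hh2, hh3⟩ := hB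
    have hp' : p - h ∈ reesRel x n :=
      mem_reesRel_iff.mpr ⟨hph.sub hh1, by simp [hh2]⟩
    rw [hst] at hp'
    have hmapp' : MvPolynomial.map mk (p - h) ∈
        MvPolynomial.homogeneousSubmodule (Fin r) (A ⧸ J) 1 * reesRel xb (n - 1) := by
      refine Submodule.mul_induction_on hp' ?_ ?_
      · intro f hf gg hgg
        rw [map_mul]
        obtain ⟨hg1, hg2⟩ := mem_reesRel_iff.mp hgg
        refine Submodule.mul_mem_mul (((mem_homogeneousSubmodule _ _).mp hf).map mk)
          (mem_reesRel_iff.mpr ⟨hg1.map mk, ?_⟩)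
        rw [hxb, mk_eval mk x gg, hg2, map_zero]
      · intro y z hy hz
        rw [map_add]
        exact Submodule.add_mem _ hy hz
    have : pb = MvPolynomial.map mk (p - h) + MvPolynomial.map mk h := by
      rw [← map_add, sub_add_cancel, hmapp]
    rw [this]
    exact Submodule.add_mem _ hmapp' hh3
  · have := homSub_mul_reesRel_le xb (n - 1)
    rwa [hn1] at this

lemma reesRel_eventually_stable [IsNoetherianRing A] (x : Fin r → A) :
    ∃ N : ℕ, 2 ≤ N ∧ ∀ n, N ≤ n → reesRelStable x n := by
  classical
  set φ : MvPolynomial (Fin r) A →ₐ[A] Polynomial A :=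
    (MvPolynomial.aeval (fun i => Polynomial.C (x i) * Polynomial.X)) with hφ
  set K : Ideal (MvPolynomial (Fin r) A) := RingHom.ker φ with hK
  obtain ⟨s, hs⟩ := (IsNoetherian.noetherian (K : Submodule (MvPolynomial (Fin r) A)
      (MvPolynomial (Fin r) A)))
  set D : ℕ := s.sup totalDegree with hD
  set G : Finset (MvPolynomial (Fin r) A) :=
    s.biUnion (fun g => (Finset.range (g.totalDegree + 1)).image
      (fun m => homogeneousComponent m g)) with hG
  -- components of kernel elements are in the kernel
  have hcomp : ∀ p ∈ K, ∀ m : ℕ, homogeneousComponent m p ∈ reesRel x m := by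
    intro p hp m
    refine mem_reesRel_iff.mpr ⟨homogeneousComponent_isHomogeneous m p, ?_⟩
    rw [← phi_coeff x p m, RingHom.mem_ker.mp hp, Polynomial.coeff_zero]
  have hGprop : ∀ g ∈ G, ∃ m ≤ D, g ∈ reesRel x m := by
    intro g hg
    rw [hG, Finset.mem_biUnion] at hg
    obtain ⟨q, hq, hgq⟩ := hg
    rw [Finset.mem_image] at hgq
    obtain ⟨m, hm, rfl⟩ := hgq
    rw [Finset.mem_range] at hm
    refine ⟨m, le_trans (by omega) (Finset.le_sup hq), ?_⟩
    apply hcomp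
    rw [← hs]
    exact Ideal.subset_span hq
  have hKG : K ≤ Ideal.span (G : Set _) := by
    intro p hp
    rw [← hs] at hp
    have hsub : (s : Set (MvPolynomial (Fin r) A)) ⊆
        ((Ideal.span (G : Set (MvPolynomial (Fin r) A)) : Ideal (MvPolynomial (Fin r) A)) :
          Set (MvPolynomial (Fin r) A)) := by
      intro q hq
      have hsum := sum_homogeneousComponent q
      rw [← hsum]
      apply Submodule.sum_mem
      intro m hm
      apply Ideal.subset_span
      rw [hG, Finset.mem_coe, Finset.mem_biUnion]
      exact ⟨q, hq, Finset.mem_image.mpr ⟨m, hm, rfl⟩⟩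
    exact Ideal.span_le.mpr hsub hp
  refine ⟨D + 2, by omega, fun n hn => ?_⟩
  apply le_antisymm
  · -- reesRel x n ≤ homSub 1 * reesRel x (n-1)
    intro p hp
    have hpK : p ∈ K := by
      have := hp.1
      exact this
    have hph : p.IsHomogeneous n := hp.2
    have hpspan := hKG hpK
    rw [Ideal.span, Submodule.mem_span_finset] at hpspan
    obtain ⟨f, -, hf⟩ := hpspan
    have hpn : p = homogeneousComponent n p := by
      rw [homogeneousComponent_of_mem ((mem_homogeneousSubmodule _ _).mpr hph), if_pos rfl]
    rw [hpn, ← hf]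
    simp_rw [smul_eq_mul]
    rw [map_sum]
    apply Submodule.sum_mem
    intro g hg
    obtain ⟨d, hdD, hgRel⟩ := hGprop g hg
    obtain ⟨hgh, hge⟩ := mem_reesRel_iff.mp hgRel
    rw [hc_mul hgh (by omega)]
    have hmem1 : homogeneousComponent (n - d) (f g) ∈
        homogeneousSubmodule (Fin r) A 1 * homogeneousSubmodule (Fin r) A (n - d - 1) := by
      rw [homSub_succ, show n - d - 1 + 1 = n - d by omega]
      exact homogeneousComponent_mem _ _
    refine Submodule.mul_induction_on hmem1 ?_ ?_
    · intro u hu v hv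
      rw [mul_assoc]
      refine Submodule.mul_mem_mul hu (mem_reesRel_iff.mpr ⟨?_, by simp [hge]⟩)
      have := ((mem_homogeneousSubmodule _ _).mp hv).mul hgh
      rwa [show n - d - 1 + d = n - 1 by omega] at this
    · intro y z hy hz
      rw [add_mul]
      exact Submodule.add_mem _ hy hz
  · have := homSub_mul_reesRel_le x (n - 1)
    rwa [show n - 1 + 1 = n by omega] at this

lemma ar_eventually [IsNoetherianRing A] (I J : Ideal A) :
    ∃ k : ℕ, 1 ≤ k ∧ ∀ n, k + 1 ≤ n → I ^ n ⊓ J = I * (I ^ (n - 1) ⊓ J) := by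
  obtain ⟨k, hk⟩ := Ideal.exists_pow_inf_eq_pow_smul I (J : Submodule A A)
  have e : ∀ m : ℕ, I ^ m • (⊤ : Submodule A A) = (I ^ m : Ideal A) := by
    intro m
    rw [Ideal.smul_eq_mul, Ideal.mul_top]
  refine ⟨k + 1, by omega, fun n hn => ?_⟩
  have h1 := hk n (by omega)
  have h2 := hk (n - 1) (by omega)
  rw [e, Ideal.smul_eq_mul] at h1 h2
  rw [e] at h1 h2
  have h3 : (I ^ (n - 1) ⊓ J : Ideal A) = I ^ (n - 1 - k) * (I ^ k ⊓ J) := h2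
  rw [h3, ← mul_assoc, ← pow_succ', show n - 1 - k + 1 = n - k by omega]
  exact h1

end Auxiliary

/-- For every `n ≥ 2`: if `L_n = V_1·L_{n-1}` (i.e. `E(I)_n = 0`) and
`I^n ∩ J = I·(I^{n-1} ∩ J)` (i.e. `E(J,A;I)_n = 0`), then `L̄_n = V̄_1·L̄_{n-1}`
(i.e. `E(I;A/J)_n = 0`); consequently `rt(I;A/J) ≤ max(rt(I), s(J,A;I))` and
`st(I;A/J) ≤ st(I) + m(J,A;I) − 1`. -/
theorem stmt_6 {A : Type*} [CommRing A] [IsNoetherianRing A] {r : ℕ}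
    (x : Fin r → A) (J : Ideal A) :
    (∀ n, 2 ≤ n → reesRelStable x n →
      (Ideal.span (Set.range x)) ^ n ⊓ J =
        Ideal.span (Set.range x) * ((Ideal.span (Set.range x)) ^ (n - 1) ⊓ J) →
      reesRelStable (fun i => Ideal.Quotient.mk J (x i)) n) ∧
    relType (fun i => Ideal.Quotient.mk J (x i)) ≤
      max (relType x) (strongAR (Ideal.span (Set.range x)) J) ∧
    siftedType (fun i => Ideal.Quotient.mk J (x i)) ≤
      siftedType x + mediumAR (Ideal.span (Set.range x)) J - 1 := by
  set I : Ideal A := Ideal.span (Set.range x) with hI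
  obtain ⟨N, hN2, hNs⟩ := reesRel_eventually_stable x
  obtain ⟨k, hk1, hkar⟩ := ar_eventually I J
  have harm : strongAR I J ∈ {s : ℕ | 1 ≤ s ∧ ∀ n, s + 1 ≤ n →
      I ^ n ⊓ J = I * (I ^ (n - 1) ⊓ J)} :=
    Nat.sInf_mem ⟨k, hk1, hkar⟩
  have hrtm : relType x ∈ {s : ℕ | 1 ≤ s ∧ ∀ n, s + 1 ≤ n → reesRelStable x n} :=
    Nat.sInf_mem ⟨N - 1, by omega, fun n hn => hNs n (by omega)⟩
  refine ⟨fun n h2 h3 h4 => part1 x J n h2 h3 h4, ?_, ?_⟩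
  · -- relType inequality
    apply Nat.sInf_le
    refine ⟨le_trans hrtm.1 (le_max_left _ _), fun n hn => ?_⟩
    have h2n : 2 ≤ n := by
      have := hrtm.1
      have := le_max_left (relType x) (strongAR I J)
      omega
    exact part1 x J n h2n
      (hrtm.2 n (by omega))
      (harm.2 n (by omega))
  · -- siftedType inequality
    set Dset : Set ℕ := {n : ℕ | 2 ≤ n ∧ I ^ n ⊓ J ≠ I * (I ^ (n - 1) ⊓ J)} with hDset
    have hsub : siftedDegrees (fun i => Ideal.Quotient.mk J (x i))
        ⊆ siftedDegrees x ∪ Dset := by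
      intro n hn
      rcases hn with h1 | h2
      · exact Or.inl (Or.inl h1)
      · obtain ⟨hn2, hnst⟩ := h2
        by_cases hx : reesRelStable x n
        · by_cases har : I ^ n ⊓ J = I * (I ^ (n - 1) ⊓ J)
          · exact absurd (part1 x J n hn2 hx har) hnst
          · exact Or.inr ⟨hn2, har⟩
        · exact Or.inl (Or.inr ⟨hn2, hx⟩)
    have hSDx_fin : (siftedDegrees x).Finite := by
      apply (Set.finite_Iio N).subset
      intro n hn
      rcases hn with h1 | h2
      · simp only [Set.mem_singleton_iff] at h1
        simp [Set.mem_Iio, h1]; omega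
      · obtain ⟨hn2, hnst⟩ := h2
        by_contra hc
        simp only [Set.mem_Iio, not_lt] at hc
        exact hnst (hNs n hc)
    have hD_fin : Dset.Finite := by
      apply (Set.finite_Iio (k + 1)).subset
      intro n hn
      obtain ⟨hn2, hnar⟩ := hn
      by_contra hc
      simp only [Set.mem_Iio, not_lt] at hc
      exact hnar (hkar n hc)
    have h1 : siftedType (fun i => Ideal.Quotient.mk J (x i))
        ≤ (siftedDegrees x ∪ Dset).ncard :=
      Set.ncard_le_ncard hsub (hSDx_fin.union hD_fin)
    have h2 : (siftedDegrees x ∪ Dset).ncard ≤ (siftedDegrees x).ncard + Dset.ncard :=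
      Set.ncard_union_le _ _
    have h3 : mediumAR I J = 1 + Dset.ncard := rfl
    have : siftedType x = (siftedDegrees x).ncard := rfl
    rw [h3]
    omega
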